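/- Let k be a field of characteristic p > 0 and let r < s be nonnegative integers, e₃ a p-power, e₂ a positive integer dividing e₃·p^r with e₂ and e₃ such that h₂ = (e₃/e₂)p^r is a p-power, and h₃ = p^s. Let G₀ be the group on k³ × k* built from β = 0 and G₁ the group built from β(x,y) = x^{p^r}y^{p^s} as in the Main Theorem (product on unipotent part: (x₁,x₂,x₃)(y₁,y₂,y₃) = (x₁+y₁+y₂^{h₂}x₃^{h₃}+β(x₃,y₃), x₂+y₂, x₃+y₃), torus acting diagonally with exponents e₁ = e₂h₂+e₃h₃, e₂, e₃). Then for any b₂, b₃ ∈ k*, the map (u₁,u₂,u₃,a) ↦ (b₂^{h₂}b₃^{p^s}u₁ + (b₃u₃)^{p^r+p^s}, b₂u₂ + (b₃u₃)^{e₂/e₃}, b₃u₃, a) is a group isomorphism from G₀ to G₁. -/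

import Mathlib

/-- The explicit isomorphism `(14.1)` between the `(2,2)`-imprimitive group built
from `β = 0` and the one built from `β(x,y) = x^{p^r} y^{p^s}`, when
`h₂ = (e₃/e₂) p^r` and `h₃ = p^s`. -/
theorem iso_beta_zero_to_monomial (k : Type*) [Field k] (p : ℕ) [Fact p.Prime] [CharP k p]
    (r s : ℕ) (hrs : r < s)
    (t w j : ℕ) (e₂ e₃ h₂ h₃ q e₁ : ℕ)
    (he₃ : e₃ = p ^ t) (hh₂ : h₂ = p ^ w) (hh₃ : h₃ = p ^ s)
    (he₂pos : 0 < e₂) (hdiv : h₂ * e₂ = e₃ * p ^ r)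
    (hq : q = p ^ j) (hqdef : e₂ = e₃ * q)
    (he₁ : e₁ = e₂ * h₂ + e₃ * h₃)
    (mul₀ mul₁ : (k × k × k) × kˣ → (k × k × k) × kˣ → (k × k × k) × kˣ)
    (hmul₀ : ∀ x y : (k × k × k) × kˣ, mul₀ x y =
      ((x.1.1 + (x.2 : k) ^ e₁ * y.1.1 + ((x.2 : k) ^ e₂ * y.1.2.1) ^ h₂ * x.1.2.2 ^ h₃,
        x.1.2.1 + (x.2 : k) ^ e₂ * y.1.2.1,
        x.1.2.2 + (x.2 : k) ^ e₃ * y.1.2.2), x.2 * y.2))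
    (hmul₁ : ∀ x y : (k × k × k) × kˣ, mul₁ x y =
      ((x.1.1 + (x.2 : k) ^ e₁ * y.1.1 + ((x.2 : k) ^ e₂ * y.1.2.1) ^ h₂ * x.1.2.2 ^ h₃
          + x.1.2.2 ^ p ^ r * ((x.2 : k) ^ e₃ * y.1.2.2) ^ p ^ s,
        x.1.2.1 + (x.2 : k) ^ e₂ * y.1.2.1,
        x.1.2.2 + (x.2 : k) ^ e₃ * y.1.2.2), x.2 * y.2))
    (b₂ b₃ : k) (hb₂ : b₂ ≠ 0) (hb₃ : b₃ ≠ 0)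
    (Φ : (k × k × k) × kˣ → (k × k × k) × kˣ)
    (hΦ : Φ = fun x : (k × k × k) × kˣ =>
      ((b₂ ^ h₂ * b₃ ^ p ^ s * x.1.1 + (b₃ * x.1.2.2) ^ (p ^ r + p ^ s),
        b₂ * x.1.2.1 + (b₃ * x.1.2.2) ^ q,
        b₃ * x.1.2.2), x.2)) :
    Function.Bijective Φ ∧ ∀ x y : (k × k × k) × kˣ, Φ (mul₀ x y) = mul₁ (Φ x) (Φ y) := by
  have hp2 : 2 ≤ p := (Fact.out : p.Prime).two_le
  subst he₃ hh₂ hh₃ hq hqdef he₁ hΦ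
  -- exponent arithmetic
  have hwj : w + j = r := by
    have : p ^ (w + (t + j)) = p ^ (t + r) := by
      rw [pow_add, pow_add, pow_add] at *
      linarith [hdiv]
    have := Nat.pow_right_injective hp2 this
    omega
  constructor
  · -- bijectivity via explicit inverse
    set B : k := b₂ ^ p ^ w * b₃ ^ p ^ s with hB
    have hBne : B ≠ 0 := mul_ne_zero (pow_ne_zero _ hb₂) (pow_ne_zero _ hb₃)
    refine Function.bijective_iff_has_inverse.2
      ⟨fun x => (((x.1.1 - x.1.2.2 ^ (p ^ r + p ^ s)) / B,
          (x.1.2.1 - x.1.2.2 ^ p ^ j) / b₂, x.1.2.2 / b₃), x.2), ?_, ?_⟩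
    · rintro ⟨⟨u₁, u₂, u₃⟩, a⟩
      simp only
      refine Prod.ext (Prod.ext ?_ (Prod.ext ?_ ?_)) rfl <;> field_simp <;> ring
    · rintro ⟨⟨u₁, u₂, u₃⟩, a⟩
      simp only
      refine Prod.ext (Prod.ext ?_ (Prod.ext ?_ ?_)) rfl <;> field_simp <;> ring
  · subst hwj
    have acp : ∀ (x y : k) (m n : ℕ), (x + y) ^ (p ^ m * p ^ n)
        = x ^ (p ^ m * p ^ n) + y ^ (p ^ m * p ^ n) := by
      intro x y m n
      rw [← pow_add]
      exact add_pow_char_pow x y p (m + n)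
    have acp' : ∀ (x y : k) (n : ℕ), (x + y) ^ p ^ n = x ^ p ^ n + y ^ p ^ n := by
      intro x y n; exact add_pow_char_pow x y p n
    rintro ⟨⟨x₁, x₂, x₃⟩, a⟩ ⟨⟨y₁, y₂, y₃⟩, b⟩
    rw [hmul₀, hmul₁]
    refine Prod.ext (Prod.ext ?_ (Prod.ext ?_ ?_)) rfl <;>
      simp only [pow_add, mul_add, add_mul, acp, acp', mul_pow] <;> ring
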